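/- Let Φ be a real n×m matrix with full column rank whose columns φ_1,…,φ_m each have unit Euclidean norm, let y ∈ ℝⁿ, and let k ≤ m. Let x_k be a vector achieving the smallest residual norm ‖y − Φx‖₂ among all x ∈ ℝ^m with at most k non-zero entries, and set r_k = y − Φx_k. If (σ_min(Φ) / √(2(2 − σ_min(Φ)²))) · min_{i : (x_k)_i ≠ 0} |(x_k)_i| > ‖r_k‖₂, then Backward Regression started from the full active set {1,…,m} and run for m − ‖x_k‖₀ iterations terminates with active set equal to the support of x_k, whose least-squares coefficients equal x_k; that is, Backward Regression solves the subset selection problem to optimality. -/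

import Mathlib

/-- The least-squares residual `r_A = y − P_A y`, where `P_A` is the orthogonal projection
onto `span{φ_j : j ∈ A}`. -/
noncomputable def lsResidual {n m : ℕ} (φ : Fin m → EuclideanSpace ℝ (Fin n))
    (y : EuclideanSpace ℝ (Fin n)) (A : Finset (Fin m)) : EuclideanSpace ℝ (Fin n) :=
  y - (Submodule.orthogonalProjection (Submodule.span ℝ (φ '' (A : Set (Fin m)))) y :
    EuclideanSpace ℝ (Fin n))

/-- One step of Backward Regression: delete an active index minimizing `‖r_{A∖{i}}‖`
(any tie-breaking). -/
def BRStep {n m : ℕ} (φ : Fin m → EuclideanSpace ℝ (Fin n))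
    (y : EuclideanSpace ℝ (Fin n)) (A B : Finset (Fin m)) : Prop :=
  ∃ i ∈ A, B = A.erase i ∧
    ∀ j ∈ A, ‖lsResidual φ y (A.erase i)‖ ≤ ‖lsResidual φ y (A.erase j)‖

/-- The smallest singular value of the matrix with columns `φ j`,
`σ_min = inf {‖Σ_j v_j φ_j‖ : ‖v‖₂ = 1}`. -/
noncomputable def sigmaMin {n : ℕ} {ι : Type*} [Fintype ι]
    (φ : ι → EuclideanSpace ℝ (Fin n)) : ℝ :=
  sInf {t : ℝ | ∃ v : EuclideanSpace ℝ ι, ‖v‖ = 1 ∧ t = ‖∑ j, v j • φ j‖}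


open Finset Submodule
open scoped RealInnerProductSpace

section Aux
variable {n m : ℕ} (φ : Fin m → EuclideanSpace ℝ (Fin n))

/-- coordinate bound in EuclideanSpace -/
lemma BR_coord_le (v : EuclideanSpace ℝ (Fin m)) (i : Fin m) : |v i| ≤ ‖v‖ := by
  rw [EuclideanSpace.norm_eq]
  rw [show |v i| = Real.sqrt (‖v i‖^2) by rw [Real.sqrt_sq_eq_abs]; simp [abs_abs]]
  apply Real.sqrt_le_sqrt
  exact Finset.single_le_sum (f := fun j => ‖v j‖^2) (fun j _ => sq_nonneg _) (Finset.mem_univ i)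

lemma BR_sigma_nonneg : 0 ≤ sigmaMin φ := by
  apply Real.sInf_nonneg
  rintro t ⟨v, -, rfl⟩
  exact norm_nonneg _

lemma BR_sigma_le (v : EuclideanSpace ℝ (Fin m)) :
    sigmaMin φ * ‖v‖ ≤ ‖∑ j, v j • φ j‖ := by
  rcases eq_or_ne v 0 with rfl | hv
  · simp
  · have hv' : ‖v‖ ≠ 0 := by simpa using hv
    have hpos : (0:ℝ) < ‖v‖ := norm_pos_iff.2 hv
    set u : EuclideanSpace ℝ (Fin m) := ‖v‖⁻¹ • v with hu
    have hun : ‖u‖ = 1 := by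
      rw [hu, norm_smul]; simp [abs_of_pos hpos, inv_mul_cancel₀ hv']
    have hmem : ‖∑ j, u j • φ j‖ ∈
        {t : ℝ | ∃ w : EuclideanSpace ℝ (Fin m), ‖w‖ = 1 ∧ t = ‖∑ j, w j • φ j‖} :=
      ⟨u, hun, rfl⟩
    have hbdd : BddBelow {t : ℝ | ∃ w : EuclideanSpace ℝ (Fin m), ‖w‖ = 1 ∧ t = ‖∑ j, w j • φ j‖} :=
      ⟨0, by rintro t ⟨w, -, rfl⟩; exact norm_nonneg _⟩
    have h1 : sigmaMin φ ≤ ‖∑ j, u j • φ j‖ := csInf_le hbdd hmem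
    have h2 : ‖∑ j, u j • φ j‖ = ‖v‖⁻¹ * ‖∑ j, v j • φ j‖ := by
      have : ∑ j, u j • φ j = ‖v‖⁻¹ • ∑ j, v j • φ j := by
        rw [Finset.smul_sum]
        refine Finset.sum_congr rfl fun j _ => ?_
        rw [hu]
        show (‖v‖⁻¹ * v j) • φ j = ‖v‖⁻¹ • v j • φ j
        rw [smul_smul]
      rw [this, norm_smul]; simp [abs_of_pos hpos]
    rw [h2] at h1
    calc sigmaMin φ * ‖v‖ ≤ (‖v‖⁻¹ * ‖∑ j, v j • φ j‖) * ‖v‖ := by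
          exact mul_le_mul_of_nonneg_right h1 (norm_nonneg v)
      _ = ‖∑ j, v j • φ j‖ := by field_simp

/-- membership in span of columns -/
lemma BR_mem_span_iff (A : Finset (Fin m)) (x : EuclideanSpace ℝ (Fin n)) :
    x ∈ Submodule.span ℝ (φ '' (A : Set (Fin m))) ↔
      ∃ c : Fin m → ℝ, (∀ j ∉ A, c j = 0) ∧ x = ∑ j, c j • φ j := by
  constructor
  · intro hx
    rw [Finsupp.mem_span_image_iff_linearCombination] at hx
    obtain ⟨l, hl, rfl⟩ := hx
    refine ⟨⇑l, fun j hj => ?_, ?_⟩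
    · by_contra h
      exact hj (hl (Finsupp.mem_support_iff.2 h))
    · rw [Finsupp.linearCombination_apply, Finsupp.sum_fintype]
      simp
  · rintro ⟨c, hc, rfl⟩
    rw [← Finset.sum_subset (Finset.subset_univ A) (by intro j _ hj; rw [hc j hj, zero_smul])]
    exact Submodule.sum_mem _ fun j hj => Submodule.smul_mem _ _
      (Submodule.subset_span ⟨j, hj, rfl⟩)

/-- projection minimality: residual is ≤ distance to any element of the span -/
lemma BR_residual_le (A : Finset (Fin m)) (y w : EuclideanSpace ℝ (Fin n))
    (hw : w ∈ Submodule.span ℝ (φ '' (A : Set (Fin m)))) :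
    ‖lsResidual φ y A‖ ≤ ‖y - w‖ := by
  unfold lsResidual
  rw [← Submodule.starProjection_apply, Submodule.starProjection_minimal]
  exact ciInf_le ⟨0, by rintro t ⟨z, rfl⟩; exact norm_nonneg _⟩
    (⟨w, hw⟩ : Submodule.span ℝ (φ '' (A : Set (Fin m))))

end Aux

section Aux2
variable {n m k : ℕ} (φ : Fin m → EuclideanSpace ℝ (Fin n))

/-- from one-dimensional optimality to orthogonality -/
lemma BR_inner_zero (u v : EuclideanSpace ℝ (Fin n)) (hv : ‖v‖ = 1)
    (h : ∀ t : ℝ, ‖u‖ ≤ ‖u - t • v‖) : ⟪u, v⟫ = 0 := by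
  by_contra hne
  have key := h ⟪u, v⟫
  have hsq : ‖u‖^2 ≤ ‖u - ⟪u, v⟫ • v‖^2 := by
    apply pow_le_pow_left₀ (norm_nonneg _) key
  rw [norm_sub_sq_real, real_inner_smul_right, norm_smul, hv] at hsq
  simp only [mul_one, Real.norm_eq_abs, sq_abs] at hsq
  nlinarith [sq_pos_of_ne_zero hne]

/-- the optimal sparse residual is orthogonal to the support columns -/
lemma BR_orth (y : EuclideanSpace ℝ (Fin n)) (xk : Fin m → ℝ) (hunit : ∀ j, ‖φ j‖ = 1)
    (hsparse : (Finset.univ.filter fun i => xk i ≠ 0).card ≤ k)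
    (hopt : ∀ x' : Fin m → ℝ, (Finset.univ.filter fun i => x' i ≠ 0).card ≤ k →
      ‖y - ∑ j, xk j • φ j‖ ≤ ‖y - ∑ j, x' j • φ j‖)
    (j : Fin m) (hj : xk j ≠ 0) :
    ⟪y - ∑ i, xk i • φ i, φ j⟫ = 0 := by
  apply BR_inner_zero _ _ (hunit j)
  intro t
  set x' : Fin m → ℝ := fun i => if i = j then xk i + t else xk i with hx'
  have hsub : (Finset.univ.filter fun i => x' i ≠ 0) ⊆
      (Finset.univ.filter fun i => xk i ≠ 0) ∪ {j} := by
    intro i hi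
    simp only [Finset.mem_filter, Finset.mem_univ, true_and, hx'] at hi
    by_cases hij : i = j
    · exact Finset.mem_union_right _ (by simp [hij])
    · simp only [if_neg hij] at hi
      exact Finset.mem_union_left _ (by simp [hi])
  have hcard : (Finset.univ.filter fun i => x' i ≠ 0).card ≤ k := by
    refine le_trans (Finset.card_le_card hsub) ?_
    rwa [Finset.union_eq_left.2 (by simp [hj])]
  have hsum : ∑ i, x' i • φ i = (∑ i, xk i • φ i) + t • φ j := by
    rw [hx']
    rw [show (∑ i, xk i • φ i) + t • φ j
        = ∑ i, (xk i • φ i + (if i = j then t • φ j else 0)) by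
      rw [Finset.sum_add_distrib, Finset.sum_ite_eq' Finset.univ j fun _ => t • φ j]
      simp]
    refine Finset.sum_congr rfl fun i _ => ?_
    by_cases hij : i = j
    · subst hij; simp [add_smul]
    · simp [hij]
  have := hopt x' hcard
  rw [hsum] at this
  rw [show y - ((∑ i, xk i • φ i) + t • φ j) = (y - ∑ i, xk i • φ i) - t • φ j by abel] at this
  exact this
end Aux2

section Aux3
variable {n m : ℕ} (φ : Fin m → EuclideanSpace ℝ (Fin n))

/-- If `S ⊆ A` and the residual target is `Φ xk` with support in `A`,
the LS residual on `A` is at most `‖y − Φ xk‖`. -/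
lemma BR_upper (y : EuclideanSpace ℝ (Fin n)) (xk : Fin m → ℝ) (A : Finset (Fin m))
    (hsupp : ∀ j, xk j ≠ 0 → j ∈ A) :
    ‖lsResidual φ y A‖ ≤ ‖y - ∑ j, xk j • φ j‖ := by
  apply BR_residual_le
  rw [BR_mem_span_iff]
  exact ⟨xk, fun j hj => by_contra fun h => hj (hsupp j h), rfl⟩


/-- scalar quadratic lemma: a nonneg quadratic has nonpositive discriminant -/
lemma BR_scalar_quad (σ t ui W : ℝ) (hσ0 : 0 ≤ σ) (hσ1 : σ ≤ 1) (ht0 : 0 ≤ t) (hW : 0 ≤ W)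
    (hforall : ∀ s : ℝ, σ ^ 2 * W + σ ^ 2 * s ^ 2 ≤ t ^ 2 + ui ^ 2 - 2 * ui * s + s ^ 2) :
    σ ^ 2 * ui ^ 2 ≤ (1 - σ ^ 2) * t ^ 2 := by
  by_cases h1 : σ ^ 2 = 1
  · have hu0 : ui = 0 := by
      by_contra hu0
      have key := hforall ((t ^ 2 + ui ^ 2 + 1) / (2 * ui))
      rw [h1] at key
      have h2 : 2 * ui * ((t ^ 2 + ui ^ 2 + 1) / (2 * ui)) = t ^ 2 + ui ^ 2 + 1 := by
        field_simp
      nlinarith [key]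
    rw [hu0, h1]; simp
  · have hlt : σ ^ 2 < 1 := lt_of_le_of_ne (by nlinarith) h1
    have hd : 0 < 1 - σ ^ 2 := by linarith
    have key := hforall (ui / (1 - σ ^ 2))
    have h3 : 0 ≤ σ ^ 2 * W := by nlinarith [sq_nonneg σ]
    have h4 : ui ^ 2 / (1 - σ ^ 2) ≤ t ^ 2 + ui ^ 2 := by
      have expand : t ^ 2 + ui ^ 2 - 2 * ui * (ui / (1 - σ ^ 2))
          + (ui / (1 - σ ^ 2)) ^ 2 - σ ^ 2 * (ui / (1 - σ ^ 2)) ^ 2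
          = t ^ 2 + ui ^ 2 - ui ^ 2 / (1 - σ ^ 2) := by
        field_simp
        ring
      nlinarith [key, h3]
    have h5 : ui ^ 2 ≤ (1 - σ ^ 2) * (t ^ 2 + ui ^ 2) := by
      rw [div_le_iff₀ hd] at h4; linarith [h4]
    nlinarith [h5]

/-- scalar step: from the `u i` bound conclude `σ|ui| ≤ b t`. -/
lemma BR_scalar_sqrt (σ ui b t : ℝ) (hσ0 : 0 ≤ σ) (hb0 : 0 ≤ b) (ht0 : 0 ≤ t)
    (hb2 : b ^ 2 = 1 - σ ^ 2) (hui2 : σ ^ 2 * ui ^ 2 ≤ (1 - σ ^ 2) * t ^ 2) :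
    σ * |ui| ≤ b * t := by
  have h5 : (σ * |ui|) ^ 2 ≤ (b * t) ^ 2 := by
    rw [mul_pow, mul_pow, hb2, sq_abs]
    exact hui2
  have h6 : 0 ≤ b * t := mul_nonneg hb0 ht0
  nlinarith [abs_nonneg ui, mul_nonneg hσ0 (abs_nonneg ui)]

/-- scalar step for the key comparison. -/
lemma BR_scalar_key (σ a ui vi b t R : ℝ) (hb0 : 0 ≤ b) (htR : t ≤ R)
    (h7 : σ * a - σ * ui ≤ σ * vi) (huit : σ * ui ≤ b * t)
    (hgap : R * (1 + b) < σ * a) : t < σ * vi := by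
  nlinarith [mul_nonneg hb0 (sub_nonneg.2 htR)]

/-- Key lower bound: removing a support column makes the residual strictly larger
than `‖r_k‖`, under the gap condition. -/
lemma BR_lower (y : EuclideanSpace ℝ (Fin n)) (xk : Fin m → ℝ)
    (hunit : ∀ j, ‖φ j‖ = 1)
    (horth : ∀ j, xk j ≠ 0 → ⟪y - ∑ l, xk l • φ l, φ j⟫ = 0)
    (hσ1 : sigmaMin φ ≤ 1)
    (i : Fin m) (hi : xk i ≠ 0)
    (hgap : ‖y - ∑ l, xk l • φ l‖ * (1 + Real.sqrt (1 - sigmaMin φ ^ 2)) <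
      sigmaMin φ * |xk i|)
    (A : Finset (Fin m)) (hiA : i ∉ A) :
    ‖y - ∑ l, xk l • φ l‖ < ‖lsResidual φ y A‖ := by
  set σ := sigmaMin φ with hσdef
  have hσ0 : 0 ≤ σ := BR_sigma_nonneg φ
  set r : EuclideanSpace ℝ (Fin n) := y - ∑ l, xk l • φ l with hrdef
  set R := ‖r‖ with hRdef
  set K := Submodule.span ℝ (φ '' ((Finset.univ : Finset (Fin m)) : Set (Fin m))) with hKdef
  have hφK : ∀ j, φ j ∈ K := fun j => Submodule.subset_span ⟨j, by simp, rfl⟩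
  set r₁ : EuclideanSpace ℝ (Fin n) := (orthogonalProjection K r : EuclideanSpace ℝ (Fin n))
    with hr₁def
  obtain ⟨u, -, hu⟩ := (BR_mem_span_iff φ Finset.univ r₁).1 (SetLike.coe_mem _)
  set r₂ : EuclideanSpace ℝ (Fin n) := r - r₁ with hr₂def
  have hr₂K : ∀ w ∈ K, ⟪r₂, w⟫ = 0 := by
    intro w hw
    rw [real_inner_comm]
    exact Submodule.sub_starProjection_mem_orthogonal (K := K) r w hw
  have hr₁r₂ : ⟪r₁, r₂⟫ = 0 := by
    rw [real_inner_comm]; exact hr₂K r₁ (SetLike.coe_mem _)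
  have hrsum : r = r₁ + r₂ := by rw [hr₂def]; abel
  set t := ‖r₁‖ with htdef
  have hpyth : R ^ 2 = t ^ 2 + ‖r₂‖ ^ 2 := by
    rw [hRdef, hrsum, norm_add_sq_real, hr₁r₂]; ring
  have htR : t ≤ R := by
    have h2 : ‖r₂‖ ^ 2 ≥ 0 := sq_nonneg _
    nlinarith [norm_nonneg r₁, norm_nonneg r]
  have ht0 : 0 ≤ t := norm_nonneg _
  -- orthogonality of r and r₂ against φ i gives r₁ ⊥ φ i
  have hr₁i : ⟪∑ l, u l • φ l, φ i⟫ = 0 := by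
    rw [← hu]
    have h1 : ⟪r, φ i⟫ = 0 := horth i hi
    have h2 : ⟪r₂, φ i⟫ = 0 := hr₂K _ (hφK i)
    have : ⟪r₁, φ i⟫ + ⟪r₂, φ i⟫ = 0 := by rw [← inner_add_left, ← hrsum]; exact h1
    linarith
  -- the bound on u i
  set b := Real.sqrt (1 - σ ^ 2) with hbdef
  have hb0 : 0 ≤ b := Real.sqrt_nonneg _
  have hb2 : b ^ 2 = 1 - σ ^ 2 := Real.sq_sqrt (by nlinarith)
  have huit : σ * |u i| ≤ b * t := by
    -- quadratic argument
    set w : EuclideanSpace ℝ (Fin m) := WithLp.toLp 2 (fun j => if j = i then 0 else u j) with hwdef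
    have hwi : w i = 0 := by simp [hwdef]
    have hΦw : ∑ l, w l • φ l = (∑ l, u l • φ l) - u i • φ i := by
      rw [show (∑ l, u l • φ l) - u i • φ i
          = ∑ l, (u l • φ l - (if l = i then u i • φ i else 0)) by
        rw [Finset.sum_sub_distrib, Finset.sum_ite_eq' Finset.univ i fun _ => u i • φ i]
        simp]
      refine Finset.sum_congr rfl fun l _ => ?_
      by_cases hl : l = i
      · subst hl; simp [hwdef]
      · simp [hwdef, hl]
    have hΦwi : ⟪∑ l, w l • φ l, φ i⟫ = - u i := by
      rw [hΦw, inner_sub_left, hr₁i, real_inner_smul_left,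
        real_inner_self_eq_norm_sq, hunit i]
      ring
    have hΦwnorm : ‖∑ l, w l • φ l‖ ^ 2 = t ^ 2 + u i ^ 2 := by
      rw [hΦw, norm_sub_sq_real, real_inner_smul_right, hr₁i, norm_smul, hunit i, htdef, hu]
      simp [Real.norm_eq_abs, sq_abs]
      try ring
    have hforall : ∀ s : ℝ, σ ^ 2 * ‖w‖ ^ 2 + σ ^ 2 * s ^ 2 ≤
        t ^ 2 + u i ^ 2 - 2 * u i * s + s ^ 2 := by
      intro s
      set ws : EuclideanSpace ℝ (Fin m) := w + s • EuclideanSpace.single i (1:ℝ) with hwsdef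
      have hwsnorm : ‖ws‖ ^ 2 = ‖w‖ ^ 2 + s ^ 2 := by
        rw [hwsdef, norm_add_sq_real, norm_smul]
        have h1 : ⟪w, s • EuclideanSpace.single i (1:ℝ)⟫ = 0 := by
          rw [real_inner_smul_right, EuclideanSpace.inner_single_right]
          simp [hwi]
        rw [h1, EuclideanSpace.norm_single]
        simp [Real.norm_eq_abs, sq_abs]
        try ring
      have hΦws : ∑ l, ws l • φ l = (∑ l, w l • φ l) + s • φ i := by
        rw [show (∑ l, w l • φ l) + s • φ i
            = ∑ l, (w l • φ l + (if l = i then s • φ i else 0)) by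
          rw [Finset.sum_add_distrib, Finset.sum_ite_eq' Finset.univ i fun _ => s • φ i]
          simp]
        refine Finset.sum_congr rfl fun l _ => ?_
        by_cases hl : l = i
        · subst hl
          have : ws l = w l + s := by
            simp [hwsdef, EuclideanSpace.single_apply]
          rw [this, add_smul]
          simp
        · have : ws l = w l := by
            simp [hwsdef, EuclideanSpace.single_apply, Ne.symm hl, hl]
          rw [this]
          simp [hl]
      have hσws := BR_sigma_le φ ws
      have hsq : σ ^ 2 * ‖ws‖ ^ 2 ≤ ‖∑ l, ws l • φ l‖ ^ 2 := by
        have h0 : 0 ≤ σ * ‖ws‖ := mul_nonneg hσ0 (norm_nonneg _)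
        calc σ ^ 2 * ‖ws‖ ^ 2 = (σ * ‖ws‖) ^ 2 := by ring
          _ ≤ ‖∑ l, ws l • φ l‖ ^ 2 := pow_le_pow_left₀ h0 hσws 2
      have hrhs : ‖∑ l, ws l • φ l‖ ^ 2 = (t ^ 2 + u i ^ 2) + 2 * s * (- u i) + s ^ 2 := by
        rw [hΦws, norm_add_sq_real, real_inner_smul_right, hΦwi, hΦwnorm, norm_smul, hunit i]
        simp [Real.norm_eq_abs, sq_abs]
        try ring
      rw [hwsnorm, hrhs] at hsq
      set q1 := ‖w‖
      linarith
    exact BR_scalar_sqrt σ (u i) b t hσ0 hb0 ht0 hb2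
      (BR_scalar_quad σ t (u i) (‖w‖ ^ 2) hσ0 hσ1 ht0 (sq_nonneg _) hforall)
  -- now the residual bound
  obtain ⟨c, hc, hcval⟩ := (BR_mem_span_iff φ A _).1
    (SetLike.coe_mem (orthogonalProjection (Submodule.span ℝ (φ '' (A : Set (Fin m)))) y))
  have hci : c i = 0 := hc i hiA
  have hres : lsResidual φ y A = (∑ l, (xk l - c l + u l) • φ l) + r₂ := by
    unfold lsResidual
    rw [hcval]
    have : ∑ l, (xk l - c l + u l) • φ l
        = (∑ l, xk l • φ l) - (∑ l, c l • φ l) + ∑ l, u l • φ l := by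
      rw [← Finset.sum_sub_distrib, ← Finset.sum_add_distrib]
      refine Finset.sum_congr rfl fun l _ => ?_
      rw [add_smul, sub_smul]
    rw [this, ← hu, hr₂def, hrdef]
    abel
  set v : EuclideanSpace ℝ (Fin m) := WithLp.toLp 2 (fun l => xk l - c l + u l) with hvdef
  have hvK : (∑ l, v l • φ l) ∈ K := by
    rw [BR_mem_span_iff]
    exact ⟨v, fun j hj => absurd (Finset.mem_univ j) hj, rfl⟩
  have hΦvr₂ : ⟪∑ l, v l • φ l, r₂⟫ = 0 := by
    rw [real_inner_comm]; exact hr₂K _ hvK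
  have hressq : ‖lsResidual φ y A‖ ^ 2 = ‖∑ l, v l • φ l‖ ^ 2 + ‖r₂‖ ^ 2 := by
    rw [hres, norm_add_sq_real, hΦvr₂]; ring
  have hvi : v i = xk i + u i := by simp [hvdef, hci]
  have hσv : σ * |v i| ≤ ‖∑ l, v l • φ l‖ := by
    calc σ * |v i| ≤ σ * ‖v‖ := by
          exact mul_le_mul_of_nonneg_left (BR_coord_le v i) hσ0
      _ ≤ ‖∑ l, v l • φ l‖ := BR_sigma_le φ v
  -- σ |v i| > t
  have hkey : t < σ * |v i| := by
    have h7 : σ * |xk i| - σ * |u i| ≤ σ * |v i| := by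
      have habs : |xk i| - |u i| ≤ |v i| := by
        rw [hvi]
        have h := abs_sub_abs_le_abs_sub (xk i) (-u i)
        simp only [sub_neg_eq_add, abs_neg] at h
        linarith
      have := mul_le_mul_of_nonneg_left habs hσ0
      linarith [mul_sub σ (|xk i|) (|u i|)]
    exact BR_scalar_key σ (|xk i|) (|u i|) (|v i|) b t R hb0 htR h7 huit hgap
  have hfin : R ^ 2 < ‖lsResidual φ y A‖ ^ 2 := by
    rw [hressq, hpyth]
    have h9 : t ^ 2 < (σ * |v i|) ^ 2 := pow_lt_pow_left₀ hkey ht0 (by norm_num)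
    have h10 : (σ * |v i|) ^ 2 ≤ ‖∑ l, v l • φ l‖ ^ 2 :=
      pow_le_pow_left₀ (mul_nonneg hσ0 (abs_nonneg _)) hσv 2
    linarith
  exact lt_of_pow_lt_pow_left₀ 2 (norm_nonneg _) hfin

end Aux3

/-- subset-selection optimality theorem of the paper: if `x_k` is an
optimal `k`-sparse approximant of `y` over the columns of `Φ` (full column rank, unit
columns) and its residual `r_k = y − Φx_k` satisfies
`(σ_min(Φ)/√(2(2−σ_min(Φ)²))) min_{(x_k)_i ≠ 0} |(x_k)_i| > ‖r_k‖₂`, then Backward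
Regression run from the full active set for `m − ‖x_k‖₀` iterations terminates with the
support of `x_k`, whose least-squares fit equals `Φx_k`. -/
theorem backward_regression_subset_selection_optimality {n m k : ℕ}
    (φ : Fin m → EuclideanSpace ℝ (Fin n)) (hrank : LinearIndependent ℝ φ)
    (hunit : ∀ j, ‖φ j‖ = 1) (hkm : k ≤ m)
    (y : EuclideanSpace ℝ (Fin n)) (xk : Fin m → ℝ)
    (hsparse : (Finset.univ.filter fun i => xk i ≠ 0).card ≤ k)
    (hne : (Finset.univ.filter fun i => xk i ≠ 0).Nonempty)
    (hopt : ∀ x' : Fin m → ℝ, (Finset.univ.filter fun i => x' i ≠ 0).card ≤ k →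
      ‖y - ∑ j, xk j • φ j‖ ≤ ‖y - ∑ j, x' j • φ j‖)
    (hbound : sigmaMin φ / Real.sqrt (2 * (2 - sigmaMin φ ^ 2)) *
        ((Finset.univ.filter fun i => xk i ≠ 0).inf' hne fun i => |xk i|) >
      ‖y - ∑ j, xk j • φ j‖) :
    ∀ B : ℕ → Finset (Fin m), B 0 = Finset.univ →
      (∀ t < m - (Finset.univ.filter fun i => xk i ≠ 0).card,
        BRStep φ y (B t) (B (t+1))) →
      B (m - (Finset.univ.filter fun i => xk i ≠ 0).card) =
          (Finset.univ.filter fun i => xk i ≠ 0) ∧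
        y - lsResidual φ y (Finset.univ.filter fun i => xk i ≠ 0) = ∑ j, xk j • φ j := by
  intro B hB0 hstep
  classical
  set S := (Finset.univ.filter fun i => xk i ≠ 0) with hSdef
  set σ := sigmaMin φ with hσdef
  set R := ‖y - ∑ j, xk j • φ j‖ with hRdef
  set M := S.inf' hne fun i => |xk i| with hMdef
  have hσ0 : 0 ≤ σ := BR_sigma_nonneg φ
  have hR0 : 0 ≤ R := norm_nonneg _
  have hMpos : 0 < M := by
    rw [hMdef, Finset.lt_inf'_iff]
    intro i hi
    rw [hSdef, Finset.mem_filter] at hi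
    exact abs_pos.2 hi.2
  -- orthogonality of the optimal residual
  have horth : ∀ j, xk j ≠ 0 → ⟪y - ∑ l, xk l • φ l, φ j⟫ = 0 :=
    fun j hj => BR_orth φ y xk hunit hsparse hopt j hj
  -- σ ≤ 1
  have hσ1 : σ ≤ 1 := by
    obtain ⟨i0, -⟩ := hne
    have hmem : (1:ℝ) ∈ {t : ℝ | ∃ v : EuclideanSpace ℝ (Fin m), ‖v‖ = 1 ∧
        t = ‖∑ j, v j • φ j‖} := by
      refine ⟨EuclideanSpace.single i0 (1:ℝ), by simp [EuclideanSpace.norm_single], ?_⟩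
      have : ∑ j, (EuclideanSpace.single i0 (1:ℝ)) j • φ j = φ i0 := by
        rw [show φ i0 = ∑ j, (if j = i0 then φ i0 else 0) by
          rw [Finset.sum_ite_eq' Finset.univ i0 fun _ => φ i0]; simp]
        refine Finset.sum_congr rfl fun j _ => ?_
        by_cases hj : j = i0
        · subst hj; simp [EuclideanSpace.single_apply]
        · simp [EuclideanSpace.single_apply, hj]
      rw [this, hunit i0]
    exact csInf_le ⟨0, by rintro x ⟨v, -, rfl⟩; exact norm_nonneg _⟩ hmem
  -- derive the gap condition
  set q := Real.sqrt (2 * (2 - σ ^ 2)) with hqdef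
  set b := Real.sqrt (1 - σ ^ 2) with hbdef
  have hb0 : 0 ≤ b := Real.sqrt_nonneg _
  have hb2 : b ^ 2 = 1 - σ ^ 2 := Real.sq_sqrt (by nlinarith)
  have hq0 : 0 < q := by
    rcases lt_or_eq_of_le (Real.sqrt_nonneg (2 * (2 - σ ^ 2))) with h | h
    · exact h
    · exfalso
      rw [hqdef] at hbound
      rw [← h, div_zero, zero_mul] at hbound
      linarith
  have hq2 : q ^ 2 = 2 * (2 - σ ^ 2) := Real.sq_sqrt (by
    by_contra hcon
    push_neg at hcon
    have : q = 0 := by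
      rw [hqdef]
      exact Real.sqrt_eq_zero_of_nonpos (by linarith)
    linarith)
  have hq1b : 1 + b ≤ q := by nlinarith [sq_nonneg (1 - b), sq_nonneg b, hq0]
  have hgapM : R * (1 + b) < σ * M := by
    have h1 : σ / q * M * q = σ * M := by field_simp
    have h2 : R * q < σ * M := by
      have := mul_lt_mul_of_pos_right hbound hq0
      rw [h1] at this
      linarith
    have h3 : R * (1 + b) ≤ R * q := mul_le_mul_of_nonneg_left hq1b hR0
    linarith
  have hgap : ∀ i ∈ S, R * (1 + b) < σ * |xk i| := by
    intro i hi
    have h4 : M ≤ |xk i| := Finset.inf'_le _ hi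
    have h5 : σ * M ≤ σ * |xk i| := mul_le_mul_of_nonneg_left h4 hσ0
    linarith
  -- the two residual comparison facts
  have hupper : ∀ A : Finset (Fin m), S ⊆ A → ‖lsResidual φ y A‖ ≤ R := by
    intro A hA
    exact BR_upper φ y xk A fun j hj => hA (by rw [hSdef]; simp [hj])
  have hlower : ∀ i ∈ S, ∀ A : Finset (Fin m), i ∉ A → R < ‖lsResidual φ y A‖ := by
    intro i hi A hiA
    have hxi : xk i ≠ 0 := by rw [hSdef, Finset.mem_filter] at hi; exact hi.2
    exact BR_lower φ y xk hunit horth hσ1 i hxi (hgap i hi) A hiA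
  -- the invariant
  have hsm : S.card ≤ m := by
    calc S.card ≤ (Finset.univ : Finset (Fin m)).card := Finset.card_le_card (Finset.subset_univ S)
      _ = m := by simp
  have hinv : ∀ t, t ≤ m - S.card → S ⊆ B t ∧ (B t).card = m - t := by
    intro t
    induction t with
    | zero => intro _; rw [hB0]; exact ⟨Finset.subset_univ S, by simp⟩
    | succ t ih =>
      intro ht
      have ht' : t < m - S.card := by omega
      obtain ⟨hsub, hcard⟩ := ih (by omega)
      obtain ⟨i, hiB, hB1, hmin⟩ := hstep t ht'
      have hiS : i ∉ S := by
        intro hiS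
        have hlt : S.card < (B t).card := by omega
        obtain ⟨j, hjB, hjS⟩ : ∃ j ∈ B t, j ∉ S := by
          by_contra hcon
          push_neg at hcon
          exact absurd (Finset.card_le_card fun x hx => hcon x hx) (by omega)
        have h1 : ‖lsResidual φ y ((B t).erase j)‖ ≤ R := by
          apply hupper
          intro s hs
          exact Finset.mem_erase.2 ⟨fun h => hjS (h ▸ hs), hsub hs⟩
        have h2 : R < ‖lsResidual φ y ((B t).erase i)‖ :=
          hlower i hiS _ (Finset.notMem_erase i (B t))
        have h3 := hmin j hjB
        linarith
      constructor
      · intro s hs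
        rw [hB1]
        exact Finset.mem_erase.2 ⟨fun h => hiS (h ▸ hs), hsub hs⟩
      · rw [hB1, Finset.card_erase_of_mem hiB, hcard]
        omega
  obtain ⟨hsub, hcard⟩ := hinv (m - S.card) le_rfl
  have hBS : B (m - S.card) = S := by
    refine (Finset.eq_of_subset_of_card_le hsub ?_).symm
    rw [hcard]
    omega
  refine ⟨hBS, ?_⟩
  -- the projection onto span S equals Φ xk
  have hproj : (orthogonalProjection (Submodule.span ℝ (φ '' (S : Set (Fin m)))) y :
      EuclideanSpace ℝ (Fin n)) = ∑ j, xk j • φ j := by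
    rw [← Submodule.starProjection_apply]
    apply Submodule.eq_starProjection_of_mem_of_inner_eq_zero
    · rw [BR_mem_span_iff]
      refine ⟨xk, fun j hj => ?_, rfl⟩
      by_contra h
      exact hj (by rw [hSdef]; simp [h])
    · intro w hw
      induction hw using Submodule.span_induction with
      | mem x hx =>
        obtain ⟨j, hj, rfl⟩ := hx
        apply horth
        rw [hSdef] at hj
        simpa using hj
      | zero => simp
      | add x z hx hz hx' hz' => rw [inner_add_right, hx', hz']; ring
      | smul a x hx hx' => rw [real_inner_smul_right, hx']; ring
  unfold lsResidual
  rw [hproj]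
  abel
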